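/- Let c₁, c₂, C ∈ ℝ with c₁ ≠ 0 and D := c₂² + 4c₁ > 0, and let F : ℝ → ℝ be differentiable and nonvanishing on an open interval I. Define y(t) = [((2c₁ + C·c₂)·sinh(½·√D·t) + C·√D·cosh(½·√D·t))·F(t)] / [((2C − c₂)·sinh(½·√D·t) + √D·cosh(½·√D·t))·c₁]. Then at every t ∈ I where the denominator (2C − c₂)·sinh(½·√D·t) + √D·cosh(½·√D·t) is nonzero, y satisfies the Riccati equation y'(t) = −(c₁/F(t))·y(t)² + (c₂ + F'(t)/F(t))·y(t) + F(t). -/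

import Mathlib

set_option maxHeartbeats 1000000


/-- Explicit solution of the Riccati equation
`y' = -(c₁/F) y² + (c₂ + F'/F) y + F` when `F` is arbitrary differentiable nonvanishing
and `D = c₂² + 4c₁ > 0`. -/
theorem riccati_solution_F_arbitrary
    (I : Set ℝ) (hI : IsOpen I)
    (c₁ c₂ C : ℝ) (hc₁ : c₁ ≠ 0)
    (D : ℝ) (hD : D = c₂ ^ 2 + 4 * c₁) (hDpos : 0 < D)
    (F : ℝ → ℝ)
    (hF : ∀ t ∈ I, DifferentiableAt ℝ F t)
    (hF0 : ∀ t ∈ I, F t ≠ 0)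
    (y : ℝ → ℝ)
    (hy : ∀ t, y t =
      ((2 * c₁ + C * c₂) * Real.sinh (1 / 2 * Real.sqrt D * t)
          + C * Real.sqrt D * Real.cosh (1 / 2 * Real.sqrt D * t)) * F t /
        (((2 * C - c₂) * Real.sinh (1 / 2 * Real.sqrt D * t)
          + Real.sqrt D * Real.cosh (1 / 2 * Real.sqrt D * t)) * c₁)) :
    ∀ t ∈ I,
      (2 * C - c₂) * Real.sinh (1 / 2 * Real.sqrt D * t)
          + Real.sqrt D * Real.cosh (1 / 2 * Real.sqrt D * t) ≠ 0 →
      deriv y t = -(c₁ / F t) * (y t) ^ 2 + (c₂ + deriv F t / F t) * y t + F t := by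
  intro t ht hden
  set a : ℝ := 1 / 2 * Real.sqrt D with ha
  have hlin : HasDerivAt (fun x : ℝ => a * x) a t := by
    simpa using (hasDerivAt_id t).const_mul a
  have hs : HasDerivAt (fun x => Real.sinh (a * x)) (Real.cosh (a * t) * a) t :=
    (Real.hasDerivAt_sinh (a * t)).comp t hlin
  have hc : HasDerivAt (fun x => Real.cosh (a * x)) (Real.sinh (a * t) * a) t :=
    (Real.hasDerivAt_cosh (a * t)).comp t hlin
  have hFd := (hF t ht).hasDerivAt
  have hnum : HasDerivAt
      (fun x => ((2 * c₁ + C * c₂) * Real.sinh (a * x)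
          + C * Real.sqrt D * Real.cosh (a * x)) * F x)
      (((2 * c₁ + C * c₂) * (Real.cosh (a * t) * a)
          + C * Real.sqrt D * (Real.sinh (a * t) * a)) * F t
        + ((2 * c₁ + C * c₂) * Real.sinh (a * t)
          + C * Real.sqrt D * Real.cosh (a * t)) * deriv F t) t :=
    ((hs.const_mul _).add (hc.const_mul _)).mul hFd
  have hdenD : HasDerivAt
      (fun x => ((2 * C - c₂) * Real.sinh (a * x) + Real.sqrt D * Real.cosh (a * x)) * c₁)
      (((2 * C - c₂) * (Real.cosh (a * t) * a) + Real.sqrt D * (Real.sinh (a * t) * a)) * c₁) t :=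
    ((hs.const_mul _).add (hc.const_mul _)).mul_const _
  have hdz : ((2 * C - c₂) * Real.sinh (a * t) + Real.sqrt D * Real.cosh (a * t)) * c₁ ≠ 0 :=
    mul_ne_zero hden hc₁
  have hyfun : y = fun x =>
      ((2 * c₁ + C * c₂) * Real.sinh (a * x) + C * Real.sqrt D * Real.cosh (a * x)) * F x /
        (((2 * C - c₂) * Real.sinh (a * x) + Real.sqrt D * Real.cosh (a * x)) * c₁) :=
    funext hy
  have hy' := (hnum.div hdenD hdz)
  simp only [Pi.div_def] at hy'
  rw [← hyfun] at hy'
  rw [hy'.deriv, hy t]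
  have hsq : Real.sqrt D ^ 2 = c₂ ^ 2 + 4 * c₁ := by
    rw [Real.sq_sqrt hDpos.le, hD]
  have hf0 := hF0 t ht
  set s := Real.sinh (a * t) with hs'
  set co := Real.cosh (a * t) with hco'
  set q := Real.sqrt D with hq'
  set f := F t with hf'
  set f' := deriv F t with hf''
  have key : f * ((((2 * c₁ + C * c₂) * (co * a) + C * q * (s * a)) * f
        + ((2 * c₁ + C * c₂) * s + C * q * co) * f') * (((2 * C - c₂) * s + q * co) * c₁)
      - ((2 * c₁ + C * c₂) * s + C * q * co) * f
        * (((2 * C - c₂) * (co * a) + q * (s * a)) * c₁))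
      = -c₁ * (((2 * c₁ + C * c₂) * s + C * q * co) * f) ^ 2
        + (c₂ * f + f') * (((2 * c₁ + C * c₂) * s + C * q * co) * f)
          * (((2 * C - c₂) * s + q * co) * c₁)
        + f ^ 2 * ((((2 * C - c₂) * s + q * co) * c₁)) ^ 2 := by
    have haq : a = 1 / 2 * q := ha
    rw [haq]
    linear_combination (c₁ * f ^ 2 * s ^ 2 * (C ^ 2 - c₂ * C - c₁)) * hsq
  have hD0 : s * (2 * C - c₂) + co * q ≠ 0 := by rw [mul_comm s, mul_comm co]; exact hden
  field_simp
  apply mul_left_cancel₀ (mul_ne_zero hf0 hc₁)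
  linear_combination key
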